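/- Let A and Ȧ be N_S×M complex matrices, σ_S² > 0, α a nonzero complex number, L a positive integer, and Γ_S > 0. Then the set of M×M Hermitian positive semidefinite matrices S satisfying tr(AᴴAS) > 0, tr(ȦᴴȦS)·tr(AᴴAS) − |tr(ȦᴴAS)|² > 0, and CRB(S) ≤ Γ_S is convex, and it coincides with the set of Hermitian PSD matrices S satisfying tr(AᴴAS) > 0 and the linear matrix inequality [[tr(ȦᴴȦS) − 1/Γ_{S,1}, conj(tr(ȦᴴAS))], [tr(ȦᴴAS), tr(AᴴAS)]] ⪰ 0, where Γ_{S,1} = 2|α|²L·Γ_S/σ_S². -/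

import Mathlib

open Matrix ComplexOrder

/-- The estimation Cramér–Rao bound as a function of the transmit covariance `S`
(context formula): `CRB(S) = (σ_S²/(2|α|²L)) · tr(AᴴAS)/(tr(ȦᴴȦS)·tr(AᴴAS) − |tr(ȦᴴAS)|²)`. -/
noncomputable def CRB {NS M : ℕ} (A Ad : Matrix (Fin NS) (Fin M) ℂ) (σS2 : ℝ) (α : ℂ)
    (L : ℕ) (S : Matrix (Fin M) (Fin M) ℂ) : ℝ :=
  σS2 / (2 * ‖α‖ ^ 2 * L) *
    (((Aᴴ * A * S).trace).re /
      (((Adᴴ * Ad * S).trace).re * ((Aᴴ * A * S).trace).re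
        - ‖(Adᴴ * A * S).trace‖ ^ 2))

lemma real_smul_posSemidef {n : Type*} [Fintype n] {S : Matrix n n ℂ}
    (hS : S.PosSemidef) {t : ℝ} (ht : 0 ≤ t) : (t • S).PosSemidef := by
  rw [Matrix.posSemidef_iff_dotProduct_mulVec]
  constructor
  · show (t • S)ᴴ = t • S
    rw [Matrix.conjTranspose_smul, star_trivial, hS.1]
  · intro x
    rw [Matrix.smul_mulVec, dotProduct_smul, Complex.real_smul]
    exact mul_nonneg (by exact_mod_cast ht) (hS.dotProduct_mulVec_nonneg x)

lemma trace_im_zero {N M : ℕ} (C : Matrix (Fin N) (Fin M) ℂ)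
    {S : Matrix (Fin M) (Fin M) ℂ} (hS : S.IsHermitian) :
    ((Cᴴ * C * S).trace).im = 0 := by
  have h : ((Cᴴ * C * S)ᴴ).trace = (Cᴴ * C * S).trace := by
    rw [Matrix.conjTranspose_mul, Matrix.conjTranspose_mul, Matrix.conjTranspose_conjTranspose,
      hS.eq]
    exact Matrix.trace_mul_comm _ _
  have h2 := (Matrix.trace_conjTranspose (Cᴴ * C * S)).symm.trans h
  have h3 := congrArg Complex.im h2
  simp only [Complex.star_def, Complex.conj_im] at h3
  linarith

lemma psd2 (p q : ℝ) (b : ℂ) (hq : 0 < q) :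
    (!![(p:ℂ), star b; b, (q:ℂ)]).PosSemidef ↔ 0 ≤ p * q - ‖b‖ ^ 2 := by
  constructor
  · intro hM
    have := hM.dotProduct_mulVec_nonneg ![(q:ℂ), -b]
    have hq' : (0:ℝ) ≤ q * (p * q - ‖b‖ ^ 2) := by
      have h2 := (Complex.le_def.mp this).1
      simp only [Complex.zero_re] at h2
      have e : (star ![(q:ℂ), -b] ⬝ᵥ (!![(p:ℂ), star b; b, (q:ℂ)] *ᵥ ![(q:ℂ), -b])).re
          = q * (p * q - ‖b‖ ^ 2) := by
        rw [show ‖b‖ ^ 2 = Complex.normSq b from (Complex.sq_norm b)]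
        simp [Matrix.mulVec, dotProduct, Fin.sum_univ_two, Complex.normSq_apply,
          Complex.mul_re, Complex.star_def]
        ring
      rw [e] at h2
      exact h2
    nlinarith
  · intro h
    have hp : 0 ≤ p := by nlinarith [sq_nonneg (‖b‖)]
    rw [Matrix.posSemidef_iff_dotProduct_mulVec]
    constructor
    · show _ᴴ = _
      ext i j
      fin_cases i <;> fin_cases j <;>
        simp [Matrix.conjTranspose_apply, Complex.star_def, Complex.conj_ofReal]
    · intro x
      set x0 := x 0; set x1 := x 1
      have hform : star x ⬝ᵥ ((!![(p:ℂ), star b; b, (q:ℂ)]) *ᵥ x)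
          = ((p * Complex.normSq x0 + q * Complex.normSq x1
              + 2 * (b * x0 * (starRingEnd ℂ) x1).re : ℝ) : ℂ) := by
        simp only [Matrix.mulVec, dotProduct, Fin.sum_univ_two,
          Matrix.cons_val_zero, Matrix.cons_val_one, Matrix.head_cons,
          Pi.star_apply, Matrix.cons_val', Matrix.empty_val', Matrix.cons_val_fin_one,
          Matrix.head_fin_const]
        apply Complex.ext <;>
          simp [Complex.normSq_apply, Complex.mul_re, Complex.mul_im, Complex.star_def] <;> ring
      rw [hform]
      rw [Complex.zero_le_real]
      have hre : -(‖b‖ * ‖x0‖ * ‖x1‖)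
          ≤ (b * x0 * (starRingEnd ℂ) x1).re := by
        have := Complex.abs_re_le_norm (b * x0 * (starRingEnd ℂ) x1)
        have habs : ‖b * x0 * (starRingEnd ℂ) x1‖
            = ‖b‖ * ‖x0‖ * ‖x1‖ := by
          simp only [norm_mul, Complex.norm_conj]
        rw [habs] at this
        have := abs_le.mp this
        linarith [this.1]
      have h0 : Complex.normSq x0 = ‖x0‖ ^ 2 := (Complex.sq_norm x0).symm
      have h1 : Complex.normSq x1 = ‖x1‖ ^ 2 := (Complex.sq_norm x1).symm
      rw [h0, h1]
      nlinarith [sq_nonneg (‖b‖ * ‖x0‖ - q * ‖x1‖),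
        norm_nonneg x0, norm_nonneg x1, norm_nonneg b,
        mul_nonneg (norm_nonneg x0) (norm_nonneg x1)]

lemma combo_ineq (p1 p2 q1 q2 r1 r2 t s : ℝ) (ht : 0 ≤ t) (hs : 0 ≤ s)
    (hq1 : 0 < q1) (hq2 : 0 < q2) (hr1 : 0 ≤ r1) (hr2 : 0 ≤ r2)
    (h1 : r1 ^ 2 ≤ p1 * q1) (h2 : r2 ^ 2 ≤ p2 * q2) :
    (t * r1 + s * r2) ^ 2 ≤ (t * p1 + s * p2) * (t * q1 + s * q2) := by
  have key : 2 * r1 * r2 ≤ p1 * q2 + p2 * q1 := by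
    have h3 : (r1 * q2 - r2 * q1) ^ 2 ≥ 0 := sq_nonneg _
    have hq12 : 0 < q1 * q2 := mul_pos hq1 hq2
    nlinarith [mul_le_mul_of_nonneg_right h1 (sq_nonneg q2), mul_le_mul_of_nonneg_right h2 (sq_nonneg q1), mul_pos hq1 hq2, sq_nonneg (r1*q2 - r2*q1)]
  nlinarith [mul_nonneg ht hs, sq_nonneg t, sq_nonneg s, mul_le_mul_of_nonneg_left key (mul_nonneg ht hs)]


/-- the set of Hermitian PSD `S` with `tr(AᴴAS) > 0`, positive CRB denominator,
and `CRB(S) ≤ Γ_S` is convex, and coincides with the set of Hermitian PSD `S` with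
`tr(AᴴAS) > 0` satisfying the Schur-complement LMI with `Γ_{S,1} = 2|α|²L·Γ_S/σ_S²`. -/
theorem stmt_8 {NS M : ℕ} (A Ad : Matrix (Fin NS) (Fin M) ℂ) (σS2 : ℝ) (hσ : 0 < σS2)
    (α : ℂ) (hα : α ≠ 0) (L : ℕ) (hL : 0 < L) (ΓS : ℝ) (hΓS : 0 < ΓS) :
    Convex ℝ {S : Matrix (Fin M) (Fin M) ℂ | S.PosSemidef ∧
        0 < ((Aᴴ * A * S).trace).re ∧
        0 < ((Adᴴ * Ad * S).trace).re * ((Aᴴ * A * S).trace).re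
              - ‖(Adᴴ * A * S).trace‖ ^ 2 ∧
        CRB A Ad σS2 α L S ≤ ΓS} ∧
    {S : Matrix (Fin M) (Fin M) ℂ | S.PosSemidef ∧
        0 < ((Aᴴ * A * S).trace).re ∧
        0 < ((Adᴴ * Ad * S).trace).re * ((Aᴴ * A * S).trace).re
              - ‖(Adᴴ * A * S).trace‖ ^ 2 ∧
        CRB A Ad σS2 α L S ≤ ΓS} =
      {S : Matrix (Fin M) (Fin M) ℂ | S.PosSemidef ∧
        0 < ((Aᴴ * A * S).trace).re ∧
        (!![((Adᴴ * Ad * S).trace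
              - ((1 / (2 * ‖α‖ ^ 2 * L * ΓS / σS2) : ℝ) : ℂ)),
            star ((Adᴴ * A * S).trace);
            (Adᴴ * A * S).trace, (Aᴴ * A * S).trace] :
          Matrix (Fin 2) (Fin 2) ℂ).PosSemidef} := by
  

  have habs : 0 < ‖α‖ := norm_pos_iff.mpr hα
  have hL' : (0:ℝ) < L := Nat.cast_pos.mpr hL
  have hden : (0:ℝ) < 2 * ‖α‖ ^ 2 * L := by positivity
  set c : ℝ := 1 / (2 * ‖α‖ ^ 2 * L * ΓS / σS2) with hc_def
  set k : ℝ := σS2 / (2 * ‖α‖ ^ 2 * L) with hk_def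
  have hk : 0 < k := div_pos hσ hden
  have hc : 0 < c := by
    rw [hc_def]
    exact one_div_pos.mpr (div_pos (mul_pos hden hΓS) hσ)
  have hck : c * ΓS = k := by
    rw [hc_def, hk_def]
    field_simp
  have key : ∀ S : Matrix (Fin M) (Fin M) ℂ, 0 < ((Aᴴ * A * S).trace).re →
      ((0 < ((Adᴴ * Ad * S).trace).re * ((Aᴴ * A * S).trace).re
            - ‖(Adᴴ * A * S).trace‖ ^ 2 ∧ CRB A Ad σS2 α L S ≤ ΓS) ↔
        0 ≤ (((Adᴴ * Ad * S).trace).re - c) * ((Aᴴ * A * S).trace).re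
            - ‖(Adᴴ * A * S).trace‖ ^ 2) := by
    intro S ha
    set a := ((Aᴴ * A * S).trace).re with ha_def
    set d := ((Adᴴ * Ad * S).trace).re with hd_def
    set r := ‖(Adᴴ * A * S).trace‖ with hr_def
    have hCRB : CRB A Ad σS2 α L S = k * (a / (d * a - r ^ 2)) := rfl
    constructor
    · rintro ⟨hD, hle⟩
      rw [hCRB, ← mul_div_assoc, div_le_iff₀ hD] at hle
      have h3 : ΓS * (c * a) ≤ ΓS * (d * a - r ^ 2) := by
        calc ΓS * (c * a) = c * ΓS * a := by ring
        _ = k * a := by rw [hck]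
        _ ≤ ΓS * (d * a - r ^ 2) := hle
      have h4 : c * a ≤ d * a - r ^ 2 := le_of_mul_le_mul_left h3 hΓS
      linarith
    · intro h
      have h4 : c * a ≤ d * a - r ^ 2 := by linarith
      have hD : 0 < d * a - r ^ 2 := lt_of_lt_of_le (mul_pos hc ha) h4
      refine ⟨hD, ?_⟩
      rw [hCRB, ← mul_div_assoc, div_le_iff₀ hD]
      calc k * a = ΓS * (c * a) := by rw [← hck]; ring
      _ ≤ ΓS * (d * a - r ^ 2) := mul_le_mul_of_nonneg_left h4 hΓS.le
  have hmat : ∀ S : Matrix (Fin M) (Fin M) ℂ, S.IsHermitian →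
      0 < ((Aᴴ * A * S).trace).re →
      ((!![((Adᴴ * Ad * S).trace - ((c : ℝ) : ℂ)), star ((Adᴴ * A * S).trace);
          (Adᴴ * A * S).trace, (Aᴴ * A * S).trace] :
          Matrix (Fin 2) (Fin 2) ℂ).PosSemidef ↔
        0 ≤ (((Adᴴ * Ad * S).trace).re - c) * ((Aᴴ * A * S).trace).re
            - ‖(Adᴴ * A * S).trace‖ ^ 2) := by
    intro S hS ha
    have hdre : (Adᴴ * Ad * S).trace = ((((Adᴴ * Ad * S).trace).re : ℝ) : ℂ) := by
      apply Complex.ext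
      · simp
      · simp [trace_im_zero Ad hS]
    have hare : (Aᴴ * A * S).trace = ((((Aᴴ * A * S).trace).re : ℝ) : ℂ) := by
      apply Complex.ext
      · simp
      · simp [trace_im_zero A hS]
    rw [hdre, hare]
    simp only [Complex.ofReal_re, ← Complex.ofReal_sub]
    exact psd2 _ _ _ ha
  clear_value c k
  have hscal : {S : Matrix (Fin M) (Fin M) ℂ | S.PosSemidef ∧
        0 < ((Aᴴ * A * S).trace).re ∧
        0 < ((Adᴴ * Ad * S).trace).re * ((Aᴴ * A * S).trace).re
              - ‖(Adᴴ * A * S).trace‖ ^ 2 ∧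
        CRB A Ad σS2 α L S ≤ ΓS} =
      {S : Matrix (Fin M) (Fin M) ℂ | S.PosSemidef ∧
        0 < ((Aᴴ * A * S).trace).re ∧
        0 ≤ (((Adᴴ * Ad * S).trace).re - c) * ((Aᴴ * A * S).trace).re
            - ‖(Adᴴ * A * S).trace‖ ^ 2} := by
    ext S
    simp only [Set.mem_setOf_eq]
    constructor
    · rintro ⟨hP, ha, hD, hC⟩
      exact ⟨hP, ha, (key S ha).mp ⟨hD, hC⟩⟩
    · rintro ⟨hP, ha, h⟩
      obtain ⟨hD, hC⟩ := (key S ha).mpr h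
      exact ⟨hP, ha, hD, hC⟩
  constructor
  · rw [hscal]
    intro S1 hS1 S2 hS2 t s ht hs hts
    simp only [Set.mem_setOf_eq] at hS1 hS2 ⊢
    obtain ⟨hP1, ha1, h1⟩ := hS1
    obtain ⟨hP2, ha2, h2⟩ := hS2
    have lin : ∀ X : Matrix (Fin M) (Fin M) ℂ,
        (X * (t • S1 + s • S2)).trace = (t : ℂ) * (X * S1).trace + (s : ℂ) * (X * S2).trace := by
      intro X
      rw [mul_add, Matrix.mul_smul, Matrix.mul_smul, Matrix.trace_add,
        Matrix.trace_smul, Matrix.trace_smul, Complex.real_smul, Complex.real_smul]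
    have la : ((Aᴴ * A * (t • S1 + s • S2)).trace).re
        = t * ((Aᴴ * A * S1).trace).re + s * ((Aᴴ * A * S2).trace).re := by
      rw [lin (Aᴴ * A)]
      simp [Complex.add_re, Complex.mul_re]
    have ld : ((Adᴴ * Ad * (t • S1 + s • S2)).trace).re
        = t * ((Adᴴ * Ad * S1).trace).re + s * ((Adᴴ * Ad * S2).trace).re := by
      rw [lin (Adᴴ * Ad)]
      simp [Complex.add_re, Complex.mul_re]
    have hb : ‖(Adᴴ * A * (t • S1 + s • S2)).trace‖
        ≤ t * ‖(Adᴴ * A * S1).trace‖ + s * ‖(Adᴴ * A * S2).trace‖ := by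
      rw [lin (Adᴴ * A)]
      refine le_trans (norm_add_le _ _) ?_
      simp only [norm_mul, Complex.norm_real, Real.norm_eq_abs, abs_of_nonneg ht, abs_of_nonneg hs]
      exact le_refl _
    have hacomb : 0 < t * ((Aᴴ * A * S1).trace).re + s * ((Aᴴ * A * S2).trace).re := by
      rcases ht.lt_or_eq with h | h
      · exact add_pos_of_pos_of_nonneg (mul_pos h ha1) (mul_nonneg hs ha2.le)
      · have hs1 : s = 1 := by linarith
        rw [← h, hs1]
        simpa using ha2
    refine ⟨(real_smul_posSemidef hP1 ht).add (real_smul_posSemidef hP2 hs), ?_, ?_⟩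
    · rw [la]; exact hacomb
    · rw [la, ld]
      set a1 := ((Aᴴ * A * S1).trace).re
      set a2 := ((Aᴴ * A * S2).trace).re
      set d1 := ((Adᴴ * Ad * S1).trace).re
      set d2 := ((Adᴴ * Ad * S2).trace).re
      set r1 := ‖(Adᴴ * A * S1).trace‖
      set r2 := ‖(Adᴴ * A * S2).trace‖
      have hsq := combo_ineq (d1 - c) (d2 - c) a1 a2 r1 r2 t s ht hs ha1 ha2
        (norm_nonneg _) (norm_nonneg _) (by linarith) (by linarith)
      have hb2 : ‖(Adᴴ * A * (t • S1 + s • S2)).trace‖ ^ 2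
          ≤ (t * r1 + s * r2) ^ 2 :=
        pow_le_pow_left₀ (norm_nonneg _) hb 2
      have hexp : t * d1 + s * d2 - c = t * (d1 - c) + s * (d2 - c) := by
        linear_combination c * hts
      rw [hexp]
      linarith
  · ext S
    simp only [Set.mem_setOf_eq]
    constructor
    · rintro ⟨hP, ha, hD, hC⟩
      exact ⟨hP, ha, (hmat S hP.1 ha).mpr ((key S ha).mp ⟨hD, hC⟩)⟩
    · rintro ⟨hP, ha, hM⟩
      obtain ⟨hD, hC⟩ := (key S ha).mpr ((hmat S hP.1 ha).mp hM)
      exact ⟨hP, ha, hD, hC⟩
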